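/- Let n ≥ 1 and d ≥ 1 be natural numbers and A, B : Fin n → Fin d → Bool, and assume every vector is nonzero: for each i there exists k with A(i)(k) = true, and for each i there exists k with B(i)(k) = true. Define the simple graph G′ on (Fin n) ⊕ (Fin n) ⊕ (Fin d) ⊕ (Fin 2), writing a_i, b_i, c_j for the vertices of the first three summands and y_a, y_b for the two vertices of the last summand, with exactly the following edges: y_a–a_i for all i; y_a–c_j for all j; y_b–b_i for all i; y_b–c_j for all j; a_i–c_j iff A(i)(j) = true; b_i–c_j iff B(i)(j) = true. Then: (1) edist_{G′}(u,v) ≤ 3 for all vertices u, v of G′; and (2) edist_{G′}(u,v) ≤ 2 for all vertices u, v of G′ if and only if for all i, j ∈ Fin n there exists k ∈ Fin d with A(i)(k) = true and B(j)(k) = true. Here edist denotes shortest-path distance in ℕ∞. -/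
import Mathlib

/-- The Orthogonal-Vectors-to-sparse-diameter gadget graph: vertices
`a_i = inl i`, `b_i = inr (inl i)`, `c_j = inr (inr (inl j))`,
`y_a = inr (inr (inr 0))`, `y_b = inr (inr (inr 1))`; edges `y_a–a_i`,
`y_a–c_j`, `y_b–b_i`, `y_b–c_j`, `a_i–c_j` iff `A i j`, `b_i–c_j` iff
`B i j`. -/
def ovGraph (n d : ℕ) (A B : Fin n → Fin d → Bool) :
    SimpleGraph (Fin n ⊕ Fin n ⊕ Fin d ⊕ Fin 2) :=
  SimpleGraph.fromRel (fun a b =>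
    match a, b with
    | Sum.inl i, Sum.inr (Sum.inr (Sum.inl j)) => A i j = true
    | Sum.inr (Sum.inl i), Sum.inr (Sum.inr (Sum.inl j)) => B i j = true
    | Sum.inr (Sum.inr (Sum.inr y)), Sum.inl _ => y = 0
    | Sum.inr (Sum.inr (Sum.inr y)), Sum.inr (Sum.inl _) => y = 1
    | Sum.inr (Sum.inr (Sum.inr _)), Sum.inr (Sum.inr (Sum.inl _)) => True
    | _, _ => False)

namespace OVaux

open SimpleGraph

lemma edist_le_two' {V : Type*} {G : SimpleGraph V} {u x v : V}
    (h1 : G.Adj u x) (h2 : G.Adj x v) : G.edist u v ≤ 2 := by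
  simpa using G.edist_le (Walk.cons h1 (Walk.cons h2 Walk.nil))

lemma edist_le_three' {V : Type*} {G : SimpleGraph V} {u x y v : V}
    (h1 : G.Adj u x) (h2 : G.Adj x y) (h3 : G.Adj y v) : G.edist u v ≤ 3 := by
  simpa using G.edist_le (Walk.cons h1 (Walk.cons h2 (Walk.cons h3 Walk.nil)))

variable {n d : ℕ} {A B : Fin n → Fin d → Bool}

lemma adj_ya_a (i : Fin n) :
    (ovGraph n d A B).Adj (.inr (.inr (.inr 0))) (.inl i) := by
  simp [ovGraph, SimpleGraph.fromRel_adj]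

lemma adj_yb_b (i : Fin n) :
    (ovGraph n d A B).Adj (.inr (.inr (.inr 1))) (.inr (.inl i)) := by
  simp [ovGraph, SimpleGraph.fromRel_adj]

lemma adj_y_c (y : Fin 2) (j : Fin d) :
    (ovGraph n d A B).Adj (.inr (.inr (.inr y))) (.inr (.inr (.inl j))) := by
  simp [ovGraph, SimpleGraph.fromRel_adj]

lemma adj_a_c {i : Fin n} {j : Fin d} (h : A i j = true) :
    (ovGraph n d A B).Adj (.inl i) (.inr (.inr (.inl j))) := by
  simp [ovGraph, SimpleGraph.fromRel_adj, h]

lemma adj_b_c {i : Fin n} {j : Fin d} (h : B i j = true) :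
    (ovGraph n d A B).Adj (.inr (.inl i)) (.inr (.inr (.inl j))) := by
  simp [ovGraph, SimpleGraph.fromRel_adj, h]

end OVaux

open OVaux SimpleGraph in
theorem stmt_18 (n d : ℕ) (hn : 1 ≤ n) (hd : 1 ≤ d)
    (A B : Fin n → Fin d → Bool)
    (hA : ∀ i : Fin n, ∃ k : Fin d, A i k = true)
    (hB : ∀ i : Fin n, ∃ k : Fin d, B i k = true) :
    (∀ u v : Fin n ⊕ Fin n ⊕ Fin d ⊕ Fin 2,
        (ovGraph n d A B).edist u v ≤ 3) ∧
    ((∀ u v : Fin n ⊕ Fin n ⊕ Fin d ⊕ Fin 2,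
        (ovGraph n d A B).edist u v ≤ 2) ↔
      ∀ i j : Fin n, ∃ k : Fin d, A i k = true ∧ B j k = true) := by
  set G := ovGraph n d A B with hG
  have k0 : Fin d := ⟨0, hd⟩
  -- every pair is at edist ≤ 2, except possibly a–b pairs
  have h2' : ∀ u v : Fin n ⊕ Fin n ⊕ Fin d ⊕ Fin 2,
      G.edist u v ≤ 2 ∨
      (∃ i j, u = Sum.inl i ∧ v = Sum.inr (Sum.inl j)) ∨
      (∃ i j, u = Sum.inr (Sum.inl i) ∧ v = Sum.inl j) := by
    rintro (i | i | j | y) (i' | i' | j' | y')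
    · exact Or.inl (edist_le_two' (adj_ya_a i).symm (adj_ya_a i'))
    · exact Or.inr (Or.inl ⟨i, i', rfl, rfl⟩)
    · exact Or.inl (edist_le_two' (adj_ya_a i).symm (adj_y_c 0 j'))
    · obtain ⟨k, hk⟩ := hA i
      exact Or.inl (edist_le_two' (adj_a_c hk) (adj_y_c y' k).symm)
    · exact Or.inr (Or.inr ⟨i, i', rfl, rfl⟩)
    · exact Or.inl (edist_le_two' (adj_yb_b i).symm (adj_yb_b i'))
    · exact Or.inl (edist_le_two' (adj_yb_b i).symm (adj_y_c 1 j'))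
    · obtain ⟨k, hk⟩ := hB i
      exact Or.inl (edist_le_two' (adj_b_c hk) (adj_y_c y' k).symm)
    · obtain ⟨k, hk⟩ := hA i'
      exact Or.inl (edist_le_two' (adj_y_c 0 j).symm (adj_ya_a i'))
    · exact Or.inl (edist_le_two' (adj_y_c 1 j).symm (adj_yb_b i'))
    · exact Or.inl (edist_le_two' (adj_y_c 0 j).symm (adj_y_c 0 j'))
    · refine Or.inl (le_trans (le_of_eq (edist_eq_one_iff_adj.mpr (adj_y_c y' j).symm)) ?_)
      norm_num
    · obtain ⟨k, hk⟩ := hA i'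
      exact Or.inl (edist_le_two' (adj_y_c y k) (adj_a_c hk).symm)
    · obtain ⟨k, hk⟩ := hB i'
      exact Or.inl (edist_le_two' (adj_y_c y k) (adj_b_c hk).symm)
    · refine Or.inl (le_trans (le_of_eq (edist_eq_one_iff_adj.mpr (adj_y_c y j'))) ?_)
      norm_num
    · exact Or.inl (edist_le_two' (adj_y_c y k0) (adj_y_c y' k0).symm)
  constructor
  · intro u v
    rcases h2' u v with h | ⟨i, j, rfl, rfl⟩ | ⟨i, j, rfl, rfl⟩
    · exact le_trans h (by norm_num)
    · obtain ⟨k, hk⟩ := hA i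
      exact edist_le_three' (adj_a_c hk) (adj_y_c 1 k).symm (adj_yb_b j)
    · obtain ⟨k, hk⟩ := hB i
      exact edist_le_three' (adj_b_c hk) (adj_y_c 0 k).symm (adj_ya_a j)
  · constructor
    · intro h i j
      have h2 := h (Sum.inl i) (Sum.inr (Sum.inl j))
      have hne : G.edist (Sum.inl i) (Sum.inr (Sum.inl j)) ≠ ⊤ := by
        intro hT
        rw [hT, top_le_iff] at h2
        simp at h2
      obtain ⟨w, hw⟩ := (reachable_of_edist_ne_top hne).exists_walk_length_eq_edist
      have hwl : w.length ≤ 2 := by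
        have : (w.length : ℕ∞) ≤ 2 := hw ▸ h2
        exact_mod_cast this
      cases w with
      | cons h1 p =>
        rename_i x
        cases p with
        | nil => simp [hG, ovGraph, SimpleGraph.fromRel_adj] at h1
        | cons h2' q =>
          rename_i x'
          have hq : q.length = 0 := by
            simp only [Walk.length_cons] at hwl; omega
          have hx' := q.eq_of_length_eq_zero hq
          subst hx'
          rcases x with i' | i' | k | y
          · simp [hG, ovGraph, SimpleGraph.fromRel_adj] at h1
          · simp [hG, ovGraph, SimpleGraph.fromRel_adj] at h2'
          · simp only [hG, ovGraph, SimpleGraph.fromRel_adj] at h1 h2'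
            exact ⟨k, by tauto, by tauto⟩
          · simp only [hG, ovGraph, SimpleGraph.fromRel_adj] at h1 h2'
            have hy0 : y = 0 := by tauto
            have hy1 : y = 1 := by tauto
            rw [hy0] at hy1; exact absurd hy1 (by decide)
    · intro hov u v
      rcases h2' u v with h | ⟨i, j, rfl, rfl⟩ | ⟨i, j, rfl, rfl⟩
      · exact h
      · obtain ⟨k, hk1, hk2⟩ := hov i j
        exact edist_le_two' (adj_a_c hk1) (adj_b_c hk2).symm
      · obtain ⟨k, hk1, hk2⟩ := hov j i
        exact edist_le_two' (adj_b_c hk2) (adj_a_c hk1).symm
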